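/- arXiv:2102.04857 — 4 statements merged into one kernel-verified Lean document; each statement's English description precedes it below -/
import Mathlib

section
/- Let $d$ be a positive integer. If $(x,y)$ is a rational solution of $y^2 = x^3 - d^2 x$ with $x \neq 0$ and $y \neq 0$, then there exist positive integers $k, j, e, m$ with $m > e > 0$, $\gcd(m,e)=1$, $\gcd(k,j)=1$, such that $d = \left(\frac{k}{2j}\right)^2 \cdot \frac{m^2 - e^2}{em}$. -/
lemma two_j_repr (q : ℚ) (hq : 0 < q) :
    ∃ k j : ℕ, 0 < k ∧ 0 < j ∧ Nat.gcd k j = 1 ∧ q = (k : ℚ) / (2 * j) := by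
  set a := q.num.natAbs with ha
  set b := q.den with hb
  have hab : Nat.Coprime a b := q.reduced
  have hb0 : 0 < b := q.pos
  have hnp : 0 < q.num := Rat.num_pos.mpr hq
  have ha0 : 0 < a := by simpa [ha] using Int.natAbs_pos.mpr (ne_of_gt hnp)
  have hnum : ((a : ℤ) : ℚ) = (q.num : ℚ) := by
    rw [Int.natAbs_of_nonneg (le_of_lt hnp)]
  have hq' : q = (a : ℚ) / b := by
    push_cast at hnum
    rw [hnum, hb]
    exact (Rat.num_div_den q).symm
  have hbQ : (b : ℚ) ≠ 0 := by positivity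
  rcases Nat.even_or_odd b with ⟨j, hj⟩ | hodd
  · refine ⟨a, j, ha0, ?_, ?_, ?_⟩
    · omega
    · have h1 : Nat.gcd a j ∣ Nat.gcd a b := Nat.dvd_gcd (Nat.gcd_dvd_left _ _)
        ((Nat.gcd_dvd_right a j).trans ⟨2, by omega⟩)
      have h2 := Nat.le_of_dvd one_pos (hab ▸ h1)
      have h3 := Nat.gcd_pos_of_pos_left j ha0
      omega
    · rw [hq']
      have : (b : ℚ) = 2 * j := by norm_num [hj]; ring
      rw [this]
  · refine ⟨2 * a, b, by omega, hb0, ?_, ?_⟩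
    · have h2b : Nat.Coprime 2 b := Nat.coprime_two_left.mpr hodd
      exact Nat.Coprime.mul h2b hab
    · rw [hq']
      push_cast
      field_simp

lemma main_aux (d : ℕ) (hd : 0 < d) (r w : ℚ) (hr : 1 < r)
    (hw : (d : ℚ) * r * (r ^ 2 - 1) = w ^ 2) :
    ∃ k j e m : ℕ, 0 < k ∧ 0 < j ∧ 0 < e ∧ e < m ∧
      Nat.gcd m e = 1 ∧ Nat.gcd k j = 1 ∧
      (d : ℚ) = ((k : ℚ) / (2 * j)) ^ 2 * (((m : ℚ) ^ 2 - (e : ℚ) ^ 2) / (e * m)) := by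
  have hr0 : (0:ℚ) < r := lt_trans one_pos hr
  have hd0 : (0:ℚ) < d := by exact_mod_cast hd
  set m := r.num.natAbs with hm
  set e := r.den with he
  have hme : Nat.Coprime m e := r.reduced
  have he0 : 0 < e := r.pos
  have heQ : ((e : ℚ)) ≠ 0 := by positivity
  have hnp : 0 < r.num := Rat.num_pos.mpr hr0
  have hnum : ((m : ℤ) : ℚ) = (r.num : ℚ) := by
    rw [Int.natAbs_of_nonneg (le_of_lt hnp)]
  have hmq : (m : ℚ) = r * e := by
    push_cast at hnum
    rw [hnum]
    have h := Rat.num_div_den r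
    rw [← he] at h
    field_simp at h
    linarith [h]
  have hem : (e : ℚ) < (m : ℚ) := by
    rw [hmq]
    have : (0:ℚ) < (e:ℚ) := by positivity
    nlinarith
  have hemN : e < m := by exact_mod_cast hem
  have hr1 : (0:ℚ) < r ^ 2 - 1 := by nlinarith
  have hw0 : w ≠ 0 := by
    intro h
    have hpos : (0:ℚ) < (d:ℚ) * r * (r ^ 2 - 1) := by positivity
    rw [hw, h] at hpos
    norm_num at hpos
  set q := |w| / (r ^ 2 - 1) with hqdef
  have hq0 : 0 < q := div_pos (abs_pos.mpr hw0) hr1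
  have hq2 : q ^ 2 = (d:ℚ) * r / (r ^ 2 - 1) := by
    have hr1' : r ^ 2 - 1 ≠ 0 := ne_of_gt hr1
    rw [hqdef, div_pow, sq_abs, ← hw]
    field_simp
  obtain ⟨k, j, hk0, hj0, hkj, hqkj⟩ := two_j_repr q hq0
  refine ⟨k, j, e, m, hk0, hj0, he0, hemN, hme, hkj, ?_⟩
  rw [← hqkj, hmq, hq2]
  field_simp

theorem stmt_1 (d : ℕ) (hd : 0 < d) (x y : ℚ)
    (hxy : y ^ 2 = x ^ 3 - (d : ℚ) ^ 2 * x) (hx : x ≠ 0) (hy : y ≠ 0) :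
    ∃ k j e m : ℕ, 0 < k ∧ 0 < j ∧ 0 < e ∧ e < m ∧
      Nat.gcd m e = 1 ∧ Nat.gcd k j = 1 ∧
      (d : ℚ) = ((k : ℚ) / (2 * j)) ^ 2 * (((m : ℚ) ^ 2 - (e : ℚ) ^ 2) / (e * m)) := by
  have hd0 : (0:ℚ) < d := by exact_mod_cast hd
  have hy2 : 0 < y ^ 2 := by positivity
  rcases lt_or_gt_of_ne hx with hneg | hpos
  · -- x < 0 : use r = -d/x, w = y*d/x²
    have hx2 : x ^ 2 < (d:ℚ) ^ 2 := by
      have h1 : x * y ^ 2 < 0 := mul_neg_of_neg_of_pos hneg hy2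
      nlinarith [sq_nonneg x]
    have hxd : -(d:ℚ) < x := by nlinarith [sq_nonneg (x + d)]
    have hr : 1 < -(d:ℚ) / x := by
      rw [lt_div_iff_of_neg hneg]
      linarith
    apply main_aux d hd (-(d:ℚ)/x) (y * d / x ^ 2) hr
    field_simp
    linear_combination -hxy
  · -- x > 0 : use r = x/d, w = y/d
    have hx2 : (d:ℚ) ^ 2 < x ^ 2 := by
      have h1 : 0 < x * y ^ 2 := mul_pos hpos hy2
      nlinarith [sq_nonneg x]
    have hxd : (d:ℚ) < x := by nlinarith [sq_nonneg (x + d)]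
    have hr : 1 < x / (d:ℚ) := by
      rw [lt_div_iff₀ hd0]; linarith
    apply main_aux d hd (x / d) (y / d) hr
    field_simp
    linear_combination -hxy
end

section
/- Let $d > 3$ be a prime such that $-1$ is a quadratic nonresidue modulo $d$ and $2$ is a quadratic nonresidue modulo $d$. Then there are no positive integers $k, j, m, e$ with $\gcd(m,e) = 1$, $\gcd(k,j) = 1$, $m > e > 0$ satisfying $4 j^2 e m \, d = k^2 (m^2 - e^2)$. -/
lemma nsq {a b w : ℕ} (h : Nat.Coprime a b) (heq : a * b = w ^ 2) : ∃ x, a = x ^ 2 := by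
  have h' : IsCoprime (a : ℤ) (b : ℤ) := by
    rw [Int.isCoprime_iff_gcd_eq_one, Int.gcd_natCast_natCast]; exact h
  obtain ⟨x, hx | hx⟩ := Int.sq_of_isCoprime h' (c := (w : ℤ)) (by exact_mod_cast heq)
  · exact ⟨x.natAbs, by have := Int.natAbs_sq x; exact_mod_cast hx.trans this.symm⟩
  · have hx2 : (a : ℤ) = 0 := le_antisymm (hx ▸ neg_nonpos.mpr (sq_nonneg x)) (by positivity)
    exact ⟨0, by simpa using (by exact_mod_cast hx2 : a = 0)⟩

lemma split_d {d a b w : ℕ} (hd : d.Prime) (h : Nat.Coprime a b)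
    (heq : a * b = d * w ^ 2) (hda : d ∣ a) : ∃ x y, a = d * x ^ 2 ∧ b = y ^ 2 := by
  obtain ⟨a', rfl⟩ := hda
  have h2 : a' * b = w ^ 2 := Nat.eq_of_mul_eq_mul_left hd.pos (by rw [← mul_assoc]; exact heq)
  have cop : Nat.Coprime a' b := Nat.Coprime.coprime_dvd_left ⟨d, mul_comm d a'⟩ h
  obtain ⟨x, hx⟩ := nsq cop h2
  obtain ⟨y, hy⟩ := nsq cop.symm (by rw [mul_comm]; exact h2)
  exact ⟨x, y, by rw [hx], hy⟩

lemma four_aux {d a b c f w : ℕ} (hd : d.Prime)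
    (cab : Nat.Coprime a b) (cac : Nat.Coprime a c) (caf : Nat.Coprime a f)
    (cbc : Nat.Coprime b c) (cbf : Nat.Coprime b f) (ccf : Nat.Coprime c f)
    (heq : a * b * c * f = d * w ^ 2) (hda : d ∣ a) :
    ∃ x y z u, a = d * x ^ 2 ∧ b = y ^ 2 ∧ c = z ^ 2 ∧ f = u ^ 2 := by
  have cop : Nat.Coprime a (b * (c * f)) := cab.mul_right (cac.mul_right caf)
  obtain ⟨x, Y, hax, hY⟩ := split_d hd cop (by rw [← heq]; ring) hda
  obtain ⟨y, hy⟩ := nsq (cbc.mul_right cbf) hY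
  obtain ⟨zz, hzz⟩ := nsq (cbc.mul_right cbf).symm (by rw [mul_comm]; exact hY)
  obtain ⟨z, hz⟩ := nsq ccf hzz
  obtain ⟨u, hu⟩ := nsq ccf.symm (by rw [mul_comm]; exact hzz)
  exact ⟨x, y, z, u, hax, hy, hz, hu⟩

lemma four {d a b c f w : ℕ} (hd : d.Prime)
    (cab : Nat.Coprime a b) (cac : Nat.Coprime a c) (caf : Nat.Coprime a f)
    (cbc : Nat.Coprime b c) (cbf : Nat.Coprime b f) (ccf : Nat.Coprime c f)
    (heq : a * b * c * f = d * w ^ 2) :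
    (∃ x y z u, a = d * x ^ 2 ∧ b = y ^ 2 ∧ c = z ^ 2 ∧ f = u ^ 2) ∨
    (∃ x y z u, a = x ^ 2 ∧ b = d * y ^ 2 ∧ c = z ^ 2 ∧ f = u ^ 2) ∨
    (∃ x y z u, a = x ^ 2 ∧ b = y ^ 2 ∧ c = d * z ^ 2 ∧ f = u ^ 2) ∨
    (∃ x y z u, a = x ^ 2 ∧ b = y ^ 2 ∧ c = z ^ 2 ∧ f = d * u ^ 2) := by
  have hdvd : d ∣ a * b * c * f := ⟨w ^ 2, heq⟩
  rcases (hd.dvd_mul.mp hdvd) with h4 | hdf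
  · rcases (hd.dvd_mul.mp h4) with h3 | hdc
    · rcases (hd.dvd_mul.mp h3) with hda | hdb
      · obtain ⟨x, y, z, u, h1, h2, h3, h4⟩ := four_aux hd cab cac caf cbc cbf ccf heq hda
        exact Or.inl ⟨x, y, z, u, h1, h2, h3, h4⟩
      · obtain ⟨y, x, z, u, h1, h2, h3, h4⟩ :=
          four_aux hd cab.symm cbc cbf cac caf ccf (by rw [← heq]; ring) hdb
        exact Or.inr (Or.inl ⟨x, y, z, u, h2, h1, h3, h4⟩)
    · obtain ⟨z, x, y, u, h1, h2, h3, h4⟩ :=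
        four_aux hd cac.symm cbc.symm ccf cab caf cbf (by rw [← heq]; ring) hdc
      exact Or.inr (Or.inr (Or.inl ⟨x, y, z, u, h2, h3, h1, h4⟩))
  · obtain ⟨u, x, y, z, h1, h2, h3, h4⟩ :=
      four_aux hd caf.symm cbf.symm ccf.symm cab cac cbc (by rw [← heq]; ring) hdf
    exact Or.inr (Or.inr (Or.inr ⟨x, y, z, u, h2, h3, h4, h1⟩))

lemma zsq {d : ℕ} (hd : d.Prime) (c : ZMod d) (x y : ℕ)
    (h : (x : ZMod d) ^ 2 = c * (y : ZMod d) ^ 2) (hy : ¬ d ∣ y) : IsSquare c := by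
  haveI : Fact d.Prime := ⟨hd⟩
  have hy' : (y : ZMod d) ≠ 0 := by
    rw [Ne, ZMod.natCast_eq_zero_iff]; exact hy
  refine ⟨(x : ZMod d) * (y : ZMod d)⁻¹, ?_⟩
  have h1 : (y : ZMod d) * (y : ZMod d)⁻¹ = 1 := mul_inv_cancel₀ hy'
  calc c = c * ((y : ZMod d) * (y : ZMod d)⁻¹) ^ 2 := by rw [h1]; ring
  _ = (x : ZMod d) ^ 2 * ((y : ZMod d)⁻¹) ^ 2 := by rw [h]; ring
  _ = (x : ZMod d) * (y : ZMod d)⁻¹ * ((x : ZMod d) * (y : ZMod d)⁻¹) := by ring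

lemma descent_core {p q : ℤ} {d v : ℕ} (m n : ℤ)
    (hp : p = m ^ 2 - n ^ 2) (hq : q = 2 * m * n) (hmn : Int.gcd m n = 1)
    (hppos : 0 < p) (hqpos : 0 < q) (hpq : p * q = 2 * (d : ℤ) * (v : ℤ) ^ 2) :
    ∃ g h : ℕ, 0 < h ∧ h < g ∧ Nat.gcd g h = 1 ∧ h * g * (g ^ 2 - h ^ 2) = d * v ^ 2 := by
  set g := m.natAbs with hg
  set h := n.natAbs with hh
  have hgm : ((g : ℤ)) ^ 2 = m ^ 2 := Int.natAbs_sq m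
  have hhn : ((h : ℤ)) ^ 2 = n ^ 2 := Int.natAbs_sq n
  have hlt : h < g := by
    have h2 : (h : ℤ) ^ 2 < (g : ℤ) ^ 2 := by rw [hgm, hhn]; nlinarith [hp, hppos]
    have : (h : ℤ) < g := by nlinarith [Int.natCast_nonneg g, Int.natCast_nonneg h]
    exact_mod_cast this
  have hmn0 : 0 < m * n := by nlinarith [hq, hqpos]
  have hghmn : (g : ℤ) * (h : ℤ) = m * n := by
    have h2 : ((g * h : ℕ) : ℤ) = |m * n| := by
      rw [Int.abs_eq_natAbs]; exact_mod_cast (Int.natAbs_mul m n).symm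
    rw [abs_of_pos hmn0] at h2; exact_mod_cast h2
  have hh0 : 0 < h := by
    rcases Nat.eq_zero_or_pos h with h0 | h0
    · exfalso
      have : n = 0 := Int.natAbs_eq_zero.mp h0
      rw [this] at hmn0; simp at hmn0
    · exact h0
  have hpgh : p = (g : ℤ) ^ 2 - (h : ℤ) ^ 2 := by rw [hgm, hhn]; exact hp
  have hqgh : q = 2 * (g : ℤ) * (h : ℤ) := by rw [hq]; linear_combination (-2 : ℤ) * hghmn
  have hple : h ^ 2 ≤ g ^ 2 := Nat.pow_le_pow_left hlt.le 2
  have key2 : (h : ℤ) * g * ((g:ℤ) ^ 2 - (h:ℤ) ^ 2) = (d:ℤ) * (v:ℤ) ^ 2 := by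
    have key : (2 : ℤ) * ((h : ℤ) * g * ((g:ℤ) ^ 2 - (h:ℤ) ^ 2)) = 2 * ((d:ℤ) * (v:ℤ) ^ 2) := by
      linear_combination hpq - q * hpgh - ((g:ℤ)^2 - (h:ℤ)^2) * hqgh
    linarith
  have keyn : h * g * (g ^ 2 - h ^ 2) = d * v ^ 2 := by
    have : ((h * g * (g ^ 2 - h ^ 2) : ℕ) : ℤ) = ((d * v ^ 2 : ℕ) : ℤ) := by
      push_cast [Nat.cast_sub hple]
      linarith [key2]
    exact_mod_cast this
  exact ⟨g, h, hh0, hlt, hmn, keyn⟩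

lemma descent_step {d : ℕ} (p q t v : ℕ)
    (hp : 0 < p) (hq : 0 < q) (hcop : Nat.Coprime p q)
    (ht : p ^ 2 + q ^ 2 = t ^ 2) (hpq : p * q = 2 * d * v ^ 2) :
    ∃ g h : ℕ, 0 < h ∧ h < g ∧ Nat.gcd g h = 1 ∧ h * g * (g ^ 2 - h ^ 2) = d * v ^ 2 := by
  have htz : ((p:ℤ))^2 + (q:ℤ)^2 = (t:ℤ)^2 := by exact_mod_cast ht
  have htriple : PythagoreanTriple (p : ℤ) (q : ℤ) (t : ℤ) := by
    show (p:ℤ) * p + q * q = t * t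
    linear_combination htz
  have hgcd : Int.gcd (p : ℤ) (q : ℤ) = 1 := by rw [Int.gcd_natCast_natCast]; exact hcop
  obtain ⟨m, n, hcase, _, hmn, _⟩ :=
    PythagoreanTriple.coprime_classification.mp ⟨htriple, hgcd⟩
  have hppos : (0 : ℤ) < p := by exact_mod_cast hp
  have hqpos : (0 : ℤ) < q := by exact_mod_cast hq
  have hpqz : (p : ℤ) * q = 2 * (d : ℤ) * (v : ℤ) ^ 2 := by exact_mod_cast hpq
  rcases hcase with ⟨h1, h2⟩ | ⟨h1, h2⟩
  · exact descent_core m n h1 h2 hmn hppos hqpos hpqz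
  · exact descent_core m n h2 h1 hmn hqpos hppos (by rw [mul_comm] at hpqz; exact hpqz)

lemma dcontra {d m e : ℕ} (hd : d.Prime) (hcop : Nat.gcd m e = 1)
    (hm : d ∣ m) (he : d ∣ e) : False := by
  have := Nat.dvd_gcd hm he
  rw [hcop] at this
  exact hd.one_lt.ne' (Nat.dvd_one.mp this)

lemma even_of_odd_mul_sq {d x M : ℕ} (hodd : d % 2 = 1) (h : d * x ^ 2 = 2 * M) :
    ∃ x0, x = 2 * x0 := by
  rcases Nat.even_or_odd x with ⟨t, rfl⟩ | ⟨t, rfl⟩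
  · exact ⟨t, by omega⟩
  · exfalso
    have hh : d * (2 * t + 1) ^ 2 = 4 * (d * (t * t + t)) + d := by ring
    rw [hh] at h
    omega

lemma odd_sq_mod4 {b : ℕ} (hb : b % 2 = 1) : ∃ T, b ^ 2 = 4 * T + 1 := by
  obtain ⟨t, rfl⟩ : ∃ t, b = 2 * t + 1 := ⟨b / 2, by omega⟩
  exact ⟨t * t + t, by ring⟩

lemma odd_of_sq_odd {b : ℕ} (h : b ^ 2 % 2 = 1) : b % 2 = 1 := by
  rcases Nat.even_or_odd b with ⟨t, rfl⟩ | ⟨t, rfl⟩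
  · exfalso
    have hh : (t + t) ^ 2 = 2 * (2 * t * t) := by ring
    omega
  · omega

lemma key (d : ℕ) (hd : d.Prime) (hodd : d % 2 = 1)
    (h1 : ¬ IsSquare (-1 : ZMod d)) (h2 : ¬ IsSquare (2 : ZMod d)) :
    ∀ w : ℕ, ∀ m e : ℕ, 0 < e → e < m → Nat.gcd m e = 1 →
      e * m * (m ^ 2 - e ^ 2) = d * w ^ 2 → False := by
  intro w
  induction w using Nat.strong_induction_on with
  | _ w IH =>
  intro m e he hem hcop heq
  have hm : 0 < m := lt_trans he hem
  have c_em : Nat.Coprime e m := Nat.coprime_comm.mp hcop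
  have c_eP : Nat.Coprime e (m - e) := by
    have h3 : Nat.gcd e (m - e) ∣ m := by
      have := Nat.dvd_add (Nat.gcd_dvd_right e (m - e)) (Nat.gcd_dvd_left e (m - e))
      rwa [Nat.sub_add_cancel hem.le] at this
    exact Nat.dvd_one.mp (hcop ▸ Nat.dvd_gcd h3 (Nat.gcd_dvd_left _ _))
  have c_eQ : Nat.Coprime e (m + e) := by
    have h3 : Nat.gcd e (m + e) ∣ m := by
      have := Nat.dvd_sub (Nat.gcd_dvd_right e (m + e)) (Nat.gcd_dvd_left e (m + e))
      rwa [Nat.add_sub_cancel] at this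
    exact Nat.dvd_one.mp (hcop ▸ Nat.dvd_gcd h3 (Nat.gcd_dvd_left _ _))
  have c_mP : Nat.Coprime m (m - e) := by
    have h3 : Nat.gcd m (m - e) ∣ e := by
      have := Nat.dvd_sub (Nat.gcd_dvd_left m (m - e)) (Nat.gcd_dvd_right m (m - e))
      rwa [Nat.sub_sub_self hem.le] at this
    exact Nat.dvd_one.mp (hcop ▸ Nat.dvd_gcd (Nat.gcd_dvd_left _ _) h3)
  have c_mQ : Nat.Coprime m (m + e) := by
    have h3 : Nat.gcd m (m + e) ∣ e := by
      have := Nat.dvd_sub (Nat.gcd_dvd_right m (m + e)) (Nat.gcd_dvd_left m (m + e))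
      rwa [Nat.add_sub_cancel_left] at this
    exact Nat.dvd_one.mp (hcop ▸ Nat.dvd_gcd (Nat.gcd_dvd_left _ _) h3)
  by_cases hpar : m % 2 = e % 2
  · -- Case B : both odd
    have hbo : m % 2 = 1 ∧ e % 2 = 1 := by
      by_contra hcon
      have hmm : m % 2 = 0 ∧ e % 2 = 0 := by omega
      have h2d : 2 ∣ Nat.gcd m e :=
        Nat.dvd_gcd (Nat.dvd_of_mod_eq_zero hmm.1) (Nat.dvd_of_mod_eq_zero hmm.2)
      rw [hcop] at h2d
      omega
    obtain ⟨s', hs'⟩ : ∃ s', m - e = 2 * s' := ⟨(m - e) / 2, by omega⟩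
    obtain ⟨t', ht'⟩ : ∃ t', m + e = 2 * t' := ⟨(m + e) / 2, by omega⟩
    have hs'pos : 0 < s' := by omega
    have ht'pos : 0 < t' := by omega
    have heq4 : 4 * (e * m * s' * t') = d * w ^ 2 := by
      rw [← heq, Nat.sq_sub_sq, hs', ht']; ring
    have hcop4 : Nat.Coprime 4 d := by
      have hc2 : Nat.Coprime d 2 := by
        refine (Nat.Prime.coprime_iff_not_dvd hd).mpr ?_
        intro hdd
        have : d = 2 := (Nat.prime_dvd_prime_iff_eq hd Nat.prime_two).mp hdd
        omega
      have := hc2.pow_right 2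
      exact (by norm_num : (2:ℕ)^2 = 4) ▸ this.symm
    obtain ⟨w0, hw0⟩ : ∃ w0, w = 2 * w0 := by
      have h4 : (4:ℕ) ∣ d * w ^ 2 := ⟨e * m * s' * t', heq4.symm⟩
      have h4w : (4:ℕ) ∣ w ^ 2 := hcop4.dvd_of_dvd_mul_left h4
      have h2w : 2 ∣ w := Nat.Prime.dvd_of_dvd_pow Nat.prime_two (dvd_trans ⟨2, rfl⟩ h4w)
      obtain ⟨w0, hw0⟩ := h2w
      exact ⟨w0, hw0⟩
    have heqB : e * m * s' * t' = d * w0 ^ 2 := by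
      have hh : 4 * (e * m * s' * t') = 4 * (d * w0 ^ 2) := by
        rw [heq4, hw0]; ring
      exact Nat.eq_of_mul_eq_mul_left (by norm_num) hh
    have c_es : Nat.Coprime e s' := by
      have h3 : Nat.gcd e s' ∣ m := by
        have := Nat.dvd_add (Nat.gcd_dvd_left e s')
          (Dvd.dvd.mul_left (Nat.gcd_dvd_right e s') 2)
        rwa [show e + 2 * s' = m by omega] at this
      exact Nat.dvd_one.mp (hcop ▸ Nat.dvd_gcd h3 (Nat.gcd_dvd_left _ _))
    have c_et : Nat.Coprime e t' := by
      have h3 : Nat.gcd e t' ∣ m := by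
        have := Nat.dvd_sub (Dvd.dvd.mul_left (Nat.gcd_dvd_right e t') 2)
          (Nat.gcd_dvd_left e t')
        rwa [show 2 * t' - e = m by omega] at this
      exact Nat.dvd_one.mp (hcop ▸ Nat.dvd_gcd h3 (Nat.gcd_dvd_left _ _))
    have c_ms : Nat.Coprime m s' := by
      have h3 : Nat.gcd m s' ∣ e := by
        have := Nat.dvd_sub (Nat.gcd_dvd_left m s')
          (Dvd.dvd.mul_left (Nat.gcd_dvd_right m s') 2)
        rwa [show m - 2 * s' = e by omega] at this
      exact Nat.dvd_one.mp (hcop ▸ Nat.dvd_gcd (Nat.gcd_dvd_left _ _) h3)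
    have c_mt : Nat.Coprime m t' := by
      have h3 : Nat.gcd m t' ∣ e := by
        have := Nat.dvd_sub (Dvd.dvd.mul_left (Nat.gcd_dvd_right m t') 2)
          (Nat.gcd_dvd_left m t')
        rwa [show 2 * t' - m = e by omega] at this
      exact Nat.dvd_one.mp (hcop ▸ Nat.dvd_gcd (Nat.gcd_dvd_left _ _) h3)
    have c_st : Nat.Coprime s' t' := by
      have h3 : Nat.gcd s' t' ∣ m := by
        have := Nat.dvd_add (Nat.gcd_dvd_left s' t') (Nat.gcd_dvd_right s' t')
        rwa [show s' + t' = m by omega] at this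
      have h4 : Nat.gcd s' t' ∣ e := by
        have := Nat.dvd_sub (Nat.gcd_dvd_right s' t') (Nat.gcd_dvd_left s' t')
        rwa [show t' - s' = e by omega] at this
      exact Nat.dvd_one.mp (hcop ▸ Nat.dvd_gcd h3 h4)
    rcases four hd c_em c_es c_et c_ms c_mt c_st heqB with
      ⟨x, y, z, u, hex, hmy, hsz, htu⟩ | ⟨x, y, z, u, hex, hmy, hsz, htu⟩ |
      ⟨x, y, z, u, hex, hmy, hsz, htu⟩ | ⟨x, y, z, u, hex, hmy, hsz, htu⟩
    · -- B1 : e = d x², m = y², s' = z², t' = u² : 2 is a QR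
      have hrel : y ^ 2 + d * x ^ 2 = 2 * u ^ 2 := by omega
      have hzc := congrArg (fun n : ℕ => (n : ZMod d)) hrel
      push_cast at hzc
      rw [ZMod.natCast_self] at hzc
      have hzz : ((y : ZMod d)) ^ 2 = 2 * (u : ZMod d) ^ 2 := by linear_combination hzc
      refine h2 (zsq hd 2 y u hzz ?_)
      intro hdu
      have hdt : d ∣ t' := htu ▸ dvd_pow hdu two_ne_zero
      have hde : d ∣ e := hex ▸ ⟨x ^ 2, rfl⟩
      have hdm : d ∣ m := by
        have := Nat.dvd_sub (Dvd.dvd.mul_left hdt 2) hde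
        rwa [show 2 * t' - e = m by omega] at this
      exact dcontra hd hcop hdm hde
    · -- B2 : m = d y² : 2 is a QR
      have hrel1 : z ^ 2 + u ^ 2 = d * y ^ 2 := by omega
      have hrel2 : x ^ 2 + z ^ 2 = u ^ 2 := by omega
      have hzc1 := congrArg (fun n : ℕ => (n : ZMod d)) hrel1
      have hzc2 := congrArg (fun n : ℕ => (n : ZMod d)) hrel2
      push_cast at hzc1 hzc2
      rw [ZMod.natCast_self] at hzc1
      have hzz : ((x : ZMod d)) ^ 2 = 2 * (u : ZMod d) ^ 2 := by
        linear_combination hzc2 - hzc1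
      refine h2 (zsq hd 2 x u hzz ?_)
      intro hdu
      have hdt : d ∣ t' := htu ▸ dvd_pow hdu two_ne_zero
      have hdm : d ∣ m := hmy ▸ ⟨y ^ 2, rfl⟩
      have hde : d ∣ e := by
        have := Nat.dvd_sub (Dvd.dvd.mul_left hdt 2) hdm
        rwa [show 2 * t' - m = e by omega] at this
      exact dcontra hd hcop hdm hde
    · -- B3 : s' = d z² : descent
      have hxodd : x % 2 = 1 := odd_of_sq_odd (by omega)
      have hyodd : y % 2 = 1 := odd_of_sq_odd (by omega)
      have hxy : x < y := by
        by_contra hcon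
        have := Nat.pow_le_pow_left (not_lt.mp hcon) 2
        omega
      obtain ⟨q, hq, hq0⟩ : ∃ q, y = x + 2 * q ∧ 0 < q := ⟨(y - x) / 2, by omega, by omega⟩
      have hsum : (q + x) ^ 2 + q ^ 2 = u ^ 2 := by
        have h2s : 2 * ((q + x) ^ 2 + q ^ 2) = x ^ 2 + y ^ 2 := by rw [hq]; ring
        omega
      have hprod : d * z ^ 2 = 2 * (q * (q + x)) := by
        have h4 : y ^ 2 = x ^ 2 + 2 * (d * z ^ 2) := by omega
        rw [hq] at h4
        have h5 : (x + 2 * q) ^ 2 = x ^ 2 + 4 * (q * (q + x)) := by ring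
        rw [h5] at h4
        omega
      obtain ⟨z0, hz0⟩ := even_of_odd_mul_sq hodd hprod
      have hcopyx : Nat.Coprime y x := by
        have hc : Nat.Coprime (y ^ 2) (x ^ 2) := by rw [← hmy, ← hex]; exact hcop
        exact (Nat.coprime_pow_right_iff two_pos _ _).mp
          ((Nat.coprime_pow_left_iff two_pos _ _).mp hc)
      have hcoppq : Nat.Coprime (q + x) q := by
        have hdx : Nat.gcd (q + x) q ∣ x := by
          have := Nat.dvd_sub (Nat.gcd_dvd_left (q + x) q) (Nat.gcd_dvd_right (q + x) q)
          rwa [show q + x - q = x by omega] at this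
        have hdy : Nat.gcd (q + x) q ∣ y := by
          rw [hq]
          exact Nat.dvd_add hdx (Dvd.dvd.mul_left (Nat.gcd_dvd_right _ _) 2)
        exact Nat.dvd_one.mp (hcopyx ▸ Nat.dvd_gcd hdy hdx)
      have hpqeq : (q + x) * q = 2 * d * z0 ^ 2 := by
        rw [hz0] at hprod
        have h8 : 2 * (2 * ((q + x) * q)) = 2 * (2 * (2 * d * z0 ^ 2)) := by
          calc 2 * (2 * ((q + x) * q)) = 2 * (q * (q + x)) * 2 := by ring
          _ = d * (2 * z0) ^ 2 * 2 := by rw [← hprod]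
          _ = 2 * (2 * (2 * d * z0 ^ 2)) := by ring
        exact Nat.eq_of_mul_eq_mul_left two_pos (Nat.eq_of_mul_eq_mul_left two_pos h8)
      obtain ⟨g, h, hh0, hhg, hcopgh, hgh⟩ :=
        descent_step (q + x) q u z0 (by omega) hq0 hcoppq hsum hpqeq
      -- size bound
      rw [hex, hmy, hsz, htu] at heqB
      have hwid : d * (x * y * z * u) ^ 2 = d * w0 ^ 2 := by rw [← heqB]; ring
      have hw0v : w0 = x * y * z * u :=
        (Nat.pow_left_injective two_ne_zero
          (Nat.eq_of_mul_eq_mul_left hd.pos hwid)).symm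
      have hx1 : 0 < x := by
        rcases Nat.eq_zero_or_pos x with h0 | h0
        · rw [h0] at hex; simp at hex; omega
        · exact h0
      have hy1 : 0 < y := by
        rcases Nat.eq_zero_or_pos y with h0 | h0
        · rw [h0] at hmy; simp at hmy; omega
        · exact h0
      have hz1 : 0 < z := by
        rcases Nat.eq_zero_or_pos z with h0 | h0
        · rw [h0] at hsz; simp at hsz; omega
        · exact h0
      have hu1 : 0 < u := by
        rcases Nat.eq_zero_or_pos u with h0 | h0
        · rw [h0] at htu; simp at htu; omega
        · exact h0
      have hzw : z ≤ w0 := by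
        rw [hw0v]
        calc z = 1 * 1 * z * 1 := by ring
        _ ≤ x * y * z * u := by
          apply Nat.mul_le_mul (Nat.mul_le_mul (Nat.mul_le_mul hx1 hy1) le_rfl) hu1
      exact IH z0 (by omega) g h hh0 hhg hcopgh hgh
    · -- B4 : t' = d u² : -1 is a QR
      have hrel : y ^ 2 + x ^ 2 = 2 * (d * u ^ 2) := by omega
      have hzc := congrArg (fun n : ℕ => (n : ZMod d)) hrel
      push_cast at hzc
      rw [ZMod.natCast_self] at hzc
      have hzz : ((y : ZMod d)) ^ 2 = (-1) * (x : ZMod d) ^ 2 := by linear_combination hzc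
      refine h1 (zsq hd (-1) y x hzz ?_)
      intro hdx
      have hde : d ∣ e := hex ▸ dvd_pow hdx two_ne_zero
      have hdt : d ∣ t' := htu ▸ ⟨u ^ 2, rfl⟩
      have hdm : d ∣ m := by
        have := Nat.dvd_sub (Dvd.dvd.mul_left hdt 2) hde
        rwa [show 2 * t' - e = m by omega] at this
      exact dcontra hd hcop hdm hde
  · -- Case A : opposite parity
    have c_PQ : Nat.Coprime (m - e) (m + e) := by
      have hg2 : Nat.gcd (m - e) (m + e) ∣ 2 := by
        have d1 : Nat.gcd (m - e) (m + e) ∣ 2 * m := by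
          have := Nat.dvd_add (Nat.gcd_dvd_left (m - e) (m + e))
            (Nat.gcd_dvd_right (m - e) (m + e))
          rwa [show m - e + (m + e) = 2 * m by omega] at this
        have d2 : Nat.gcd (m - e) (m + e) ∣ 2 * e := by
          have := Nat.dvd_sub (Nat.gcd_dvd_right (m - e) (m + e))
            (Nat.gcd_dvd_left (m - e) (m + e))
          rwa [show m + e - (m - e) = 2 * e by omega] at this
        have := Nat.dvd_gcd d1 d2
        rwa [Nat.gcd_mul_left, hcop, mul_one] at this
      rcases (Nat.dvd_prime Nat.prime_two).mp hg2 with h' | h'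
      · exact h'
      · exfalso
        obtain ⟨c2, hc2⟩ := h' ▸ Nat.gcd_dvd_right (m - e) (m + e)
        omega
    have heq4 : e * m * (m - e) * (m + e) = d * w ^ 2 := by
      rw [← heq, Nat.sq_sub_sq]; ring
    rcases four hd c_em c_eP c_eQ c_mP c_mQ c_PQ heq4 with
      ⟨x, y, b, c, hex, hmy, hPb, hQc⟩ | ⟨x, y, b, c, hex, hmy, hPb, hQc⟩ |
      ⟨x, y, b, c, hex, hmy, hPb, hQc⟩ | ⟨x, y, b, c, hex, hmy, hPb, hQc⟩
    · -- A1 : e = d x² : parity contradiction or descent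
      by_cases hee2 : e % 2 = 1
      · -- m even : mod 4 contradiction
        have hbodd : b % 2 = 1 := odd_of_sq_odd (by omega)
        have hcodd : c % 2 = 1 := odd_of_sq_odd (by omega)
        obtain ⟨T, hT⟩ := odd_sq_mod4 hbodd
        obtain ⟨U, hU⟩ := odd_sq_mod4 hcodd
        omega
      · -- e even, m odd : descent
        have hbodd : b % 2 = 1 := odd_of_sq_odd (by omega)
        have hcodd : c % 2 = 1 := odd_of_sq_odd (by omega)
        have hbc : b < c := by
          by_contra hcon
          have := Nat.pow_le_pow_left (not_lt.mp hcon) 2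
          omega
        obtain ⟨q, hq, hq0⟩ : ∃ q, c = b + 2 * q ∧ 0 < q := ⟨(c - b) / 2, by omega, by omega⟩
        have hsum : (q + b) ^ 2 + q ^ 2 = y ^ 2 := by
          have h2s : 2 * ((q + b) ^ 2 + q ^ 2) = b ^ 2 + c ^ 2 := by rw [hq]; ring
          omega
        have hprod : d * x ^ 2 = 2 * (q * (q + b)) := by
          have h4 : c ^ 2 = b ^ 2 + 2 * e := by omega
          rw [hq] at h4
          have h5 : (b + 2 * q) ^ 2 = b ^ 2 + 4 * (q * (q + b)) := by ring
          rw [h5] at h4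
          omega
        obtain ⟨x0, hx0⟩ := even_of_odd_mul_sq hodd hprod
        have hcopbc : Nat.Coprime b c := by
          have hc : Nat.Coprime (b ^ 2) (c ^ 2) := by rw [← hPb, ← hQc]; exact c_PQ
          exact (Nat.coprime_pow_right_iff two_pos _ _).mp
            ((Nat.coprime_pow_left_iff two_pos _ _).mp hc)
        have hcoppq : Nat.Coprime (q + b) q := by
          have hdb : Nat.gcd (q + b) q ∣ b := by
            have := Nat.dvd_sub (Nat.gcd_dvd_left (q + b) q) (Nat.gcd_dvd_right (q + b) q)
            rwa [show q + b - q = b by omega] at this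
          have hdc : Nat.gcd (q + b) q ∣ c := by
            rw [hq]
            exact Nat.dvd_add hdb (Dvd.dvd.mul_left (Nat.gcd_dvd_right _ _) 2)
          exact Nat.dvd_one.mp (hcopbc ▸ Nat.dvd_gcd hdb hdc)
        have hpqeq : (q + b) * q = 2 * d * x0 ^ 2 := by
          rw [hx0] at hprod
          have h8 : 2 * (2 * ((q + b) * q)) = 2 * (2 * (2 * d * x0 ^ 2)) := by
            calc 2 * (2 * ((q + b) * q)) = 2 * (q * (q + b)) * 2 := by ring
            _ = d * (2 * x0) ^ 2 * 2 := by rw [← hprod]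
            _ = 2 * (2 * (2 * d * x0 ^ 2)) := by ring
          exact Nat.eq_of_mul_eq_mul_left two_pos (Nat.eq_of_mul_eq_mul_left two_pos h8)
        obtain ⟨g, h, hh0, hhg, hcopgh, hgh⟩ :=
          descent_step (q + b) q y x0 (by omega) hq0 hcoppq hsum hpqeq
        rw [hPb, hQc, hex, hmy] at heq4
        have hwid : d * (x * y * b * c) ^ 2 = d * w ^ 2 := by rw [← heq4]; ring
        have hwv : w = x * y * b * c :=
          (Nat.pow_left_injective two_ne_zero
            (Nat.eq_of_mul_eq_mul_left hd.pos hwid)).symm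
        have hx1 : 0 < x := by
          rcases Nat.eq_zero_or_pos x with h0 | h0
          · rw [h0] at hex; simp at hex; omega
          · exact h0
        have hy1 : 0 < y := by
          rcases Nat.eq_zero_or_pos y with h0 | h0
          · rw [h0] at hmy; simp at hmy; omega
          · exact h0
        have hb1 : 0 < b := by
          rcases Nat.eq_zero_or_pos b with h0 | h0
          · rw [h0] at hPb; simp at hPb; omega
          · exact h0
        have hc1 : 0 < c := by
          rcases Nat.eq_zero_or_pos c with h0 | h0
          · rw [h0] at hQc; simp at hQc; omega
          · exact h0
        have hxw : x ≤ w := by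
          rw [hwv]
          calc x = x * 1 * 1 * 1 := by ring
          _ ≤ x * y * b * c := by
            apply Nat.mul_le_mul (Nat.mul_le_mul (Nat.mul_le_mul le_rfl hy1) hb1) hc1
        exact IH x0 (by omega) g h hh0 hhg hcopgh hgh
    · -- A2 : m = d y² : -1 is a QR
      have hrel : x ^ 2 + b ^ 2 = d * y ^ 2 := by omega
      have hzc := congrArg (fun n : ℕ => (n : ZMod d)) hrel
      push_cast at hzc
      rw [ZMod.natCast_self] at hzc
      have hzz : ((b : ZMod d)) ^ 2 = (-1) * (x : ZMod d) ^ 2 := by linear_combination hzc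
      refine h1 (zsq hd (-1) b x hzz ?_)
      intro hdx
      have hde : d ∣ e := hex ▸ dvd_pow hdx two_ne_zero
      have hdm : d ∣ m := hmy ▸ ⟨y ^ 2, rfl⟩
      exact dcontra hd hcop hdm hde
    · -- A3 : m - e = d b² : 2 is a QR
      have hrel1 : x ^ 2 + d * b ^ 2 = y ^ 2 := by omega
      have hrel2 : y ^ 2 + x ^ 2 = c ^ 2 := by omega
      have hzc1 := congrArg (fun n : ℕ => (n : ZMod d)) hrel1
      have hzc2 := congrArg (fun n : ℕ => (n : ZMod d)) hrel2
      push_cast at hzc1 hzc2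
      rw [ZMod.natCast_self] at hzc1
      have hzz : ((c : ZMod d)) ^ 2 = 2 * (x : ZMod d) ^ 2 := by
        linear_combination -hzc1 - hzc2
      refine h2 (zsq hd 2 c x hzz ?_)
      intro hdx
      have hde : d ∣ e := hex ▸ dvd_pow hdx two_ne_zero
      have hdP : d ∣ m - e := hPb ▸ ⟨b ^ 2, rfl⟩
      have hdm : d ∣ m := by
        have := Nat.dvd_add hdP hde
        rwa [show m - e + e = m by omega] at this
      exact dcontra hd hcop hdm hde
    · -- A4 : m + e = d c² : -1 is a QR
      have hrel : y ^ 2 + x ^ 2 = d * c ^ 2 := by omega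
      have hzc := congrArg (fun n : ℕ => (n : ZMod d)) hrel
      push_cast at hzc
      rw [ZMod.natCast_self] at hzc
      have hzz : ((y : ZMod d)) ^ 2 = (-1) * (x : ZMod d) ^ 2 := by linear_combination hzc
      refine h1 (zsq hd (-1) y x hzz ?_)
      intro hdx
      have hde : d ∣ e := hex ▸ dvd_pow hdx two_ne_zero
      have hdQ : d ∣ m + e := hQc ▸ ⟨c ^ 2, rfl⟩
      have hdm : d ∣ m := by
        have := Nat.dvd_sub hdQ hde
        rwa [Nat.add_sub_cancel] at this
      exact dcontra hd hcop hdm hde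

theorem stmt_3 (d : ℕ) (hd : d.Prime) (hd3 : 3 < d)
    (h1 : ¬ IsSquare (-1 : ZMod d)) (h2 : ¬ IsSquare (2 : ZMod d)) :
    ¬ ∃ k j m e : ℕ, 0 < k ∧ 0 < j ∧ 0 < e ∧ e < m ∧
      Nat.gcd m e = 1 ∧ Nat.gcd k j = 1 ∧
      4 * j ^ 2 * e * m * d = k ^ 2 * (m ^ 2 - e ^ 2) := by
  rintro ⟨k, j, m, e, hk, hj, he, hem, hcopme, hcopkj, heq⟩
  have hodd : d % 2 = 1 := by
    rcases hd.eq_two_or_odd with h | h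
    · omega
    · exact h
  have hm : 0 < m := lt_trans he hem
  have H : k ^ 2 * (e * m * (m ^ 2 - e ^ 2)) = d * (2 * j * e * m) ^ 2 := by
    calc k ^ 2 * (e * m * (m ^ 2 - e ^ 2)) = e * m * (k ^ 2 * (m ^ 2 - e ^ 2)) := by ring
    _ = e * m * (4 * j ^ 2 * e * m * d) := by rw [← heq]
    _ = d * (2 * j * e * m) ^ 2 := by ring
  set W := 2 * j * e * m with hW
  set G := Nat.gcd k W with hG
  have hg : 0 < G := Nat.gcd_pos_of_pos_left _ hk
  obtain ⟨k1, hk1⟩ : G ∣ k := Nat.gcd_dvd_left k W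
  obtain ⟨W1, hW1⟩ : G ∣ W := Nat.gcd_dvd_right k W
  have hcop1 : Nat.Coprime k1 W1 := by
    have hcd := Nat.coprime_div_gcd_div_gcd (m := k) (n := W) hg
    have e1 : k / G = k1 := by rw [hk1, Nat.mul_div_cancel_left _ hg]
    have e2 : W / G = W1 := by rw [hW1, Nat.mul_div_cancel_left _ hg]
    rwa [← hG, e1, e2] at hcd
  have H2 : k1 ^ 2 * (e * m * (m ^ 2 - e ^ 2)) = d * W1 ^ 2 := by
    have hgg : (G) ^ 2 * (k1 ^ 2 * (e * m * (m ^ 2 - e ^ 2)))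
        = (G) ^ 2 * (d * W1 ^ 2) := by
      calc (G) ^ 2 * (k1 ^ 2 * (e * m * (m ^ 2 - e ^ 2)))
          = (G * k1) ^ 2 * (e * m * (m ^ 2 - e ^ 2)) := by ring
      _ = d * (G * W1) ^ 2 := by rw [← hk1, ← hW1]; exact H
      _ = (G) ^ 2 * (d * W1 ^ 2) := by ring
    exact Nat.eq_of_mul_eq_mul_left (by positivity) hgg
  have hdvd : k1 ^ 2 ∣ d * W1 ^ 2 := ⟨e * m * (m ^ 2 - e ^ 2), H2.symm⟩
  have hcop2 : Nat.Coprime (k1 ^ 2) (W1 ^ 2) := Nat.Coprime.pow 2 2 hcop1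
  have hk1d : k1 ^ 2 ∣ d := hcop2.dvd_of_dvd_mul_right hdvd
  have hk1' : k1 ∣ d := dvd_trans (dvd_pow_self k1 two_ne_zero) hk1d
  rcases (Nat.dvd_prime hd).mp hk1' with h1' | h1'
  · rw [h1'] at H2
    simp only [one_pow, one_mul] at H2
    exact key d hd hodd h1 h2 W1 m e he hem hcopme H2
  · rw [h1'] at hk1d
    have hled := Nat.le_of_dvd hd.pos hk1d
    nlinarith [hd.two_le]
end

section
/- Let $d > 3$ be a prime with $-1$ a quadratic nonresidue and $2$ a quadratic nonresidue modulo $d$. Then the elliptic curve $y^2 = x^3 - d^2 x$ has no rational points $(x,y)$ with $y \neq 0$; equivalently, $d$ is not a congruent number. -/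
set_option maxHeartbeats 1000000

private lemma zmod8A : ∀ a b c : ZMod 8, (2*a+1)^2 + (2*b+1)^2 ≠ 2*3*c^2 := by decide

private lemma zmod8B : ∀ a b c : ZMod 8, (2*a+1)^2 - (2*b+1)^2 ≠ 2*3*(2*c+1)^2 := by decide

private lemma pos_sq_of_coprime {a b c : ℤ} (h : IsCoprime a b) (heq : a * b = c ^ 2)
    (ha : 0 < a) : ∃ r : ℤ, 0 < r ∧ a = r ^ 2 := by
  obtain ⟨r, hr | hr⟩ := Int.sq_of_isCoprime h heq
  · refine ⟨|r|, ?_, by rw [hr, sq_abs]⟩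
    rcases eq_or_ne r 0 with h0 | h0
    · rw [h0] at hr; simp at hr; omega
    · exact abs_pos.mpr h0
  · nlinarith [sq_nonneg r]


private lemma pos_factor {d m m₁ : ℤ} (hd : 0 < d) (hm : 0 < m) (h : m = d * m₁) : 0 < m₁ := by
  rcases lt_trichotomy m₁ 0 with h1 | h1 | h1
  · have : d * m₁ < 0 := mul_neg_of_pos_of_neg hd h1
    linarith
  · rw [h1, mul_zero] at h; omega
  · exact h1

private lemma descent (d : ℕ) (hd : d.Prime) (h8 : d % 8 = 3)
    (h1 : ¬ IsSquare (-1 : ZMod d)) (h2 : ¬ IsSquare (2 : ZMod d)) :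
    ∀ (N : ℕ) (X Y Z W : ℤ), Z.natAbs ≤ N → 0 < X → 0 < Y → 0 < W →
      IsCoprime X Y → X ^ 2 + Y ^ 2 = Z ^ 2 → X * Y = 2 * d * W ^ 2 → False := by
  haveI : Fact d.Prime := ⟨hd⟩
  have hdpos : (0:ℤ) < d := by exact_mod_cast hd.pos
  have hdZ : Prime (d:ℤ) := Nat.prime_iff_prime_int.mp hd
  have hd8 : (d : ZMod 8) = 3 := by
    rw [← ZMod.natCast_mod, h8]; rfl
  intro N
  induction N with
  | zero =>
    intro X Y Z W hZN hX hY hW hc hpy hw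
    have : Z = 0 := by
      have := Int.natAbs_eq_zero.mp (Nat.le_zero.mp hZN)
      exact this
    rw [this] at hpy; nlinarith
  | succ N IH =>
    intro X Y Z W hZN hX hY hW hc hpy hw
    -- reduce to the case Y even, Z > 0
    have hZsq : Z ^ 2 = |Z| ^ 2 := (sq_abs Z).symm
    have key : ∀ X Y Z W : ℤ, Z.natAbs ≤ N + 1 → 0 < X → 0 < Y → 0 < Z → 0 < W →
        Even Y → IsCoprime X Y → X ^ 2 + Y ^ 2 = Z ^ 2 → X * Y = 2 * d * W ^ 2 → False := by
      clear hZN hX hY hW hc hpy hw hZsq X Y Z W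
      intro X Y Z W hZN hX hY hZ hW hEY hc hpy hw
      -- X is odd
      have hOX : Odd X := by
        rcases Int.even_or_odd X with hEX | h
        · exfalso
          have h2 : IsUnit (2:ℤ) := hc.isUnit_of_dvd' hEX.two_dvd hEY.two_dvd
          rw [Int.isUnit_iff] at h2; omega
        · exact h
      -- Z odd
      have hOZ : Odd Z := by
        rcases Int.even_or_odd Z with hEZ | h
        · exfalso
          have h1 : Even (X ^ 2) := by
            have : X ^ 2 = Z ^ 2 - Y ^ 2 := by linarith
            rw [this]
            have e1 : Even (Z ^ 2) := by rw [sq]; exact hEZ.mul_right Z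
            have e2 : Even (Y ^ 2) := by rw [sq]; exact hEY.mul_right Y
            exact e1.sub e2
          rw [Int.even_pow] at h1
          exact (Int.not_odd_iff_even.mpr h1.1) hOX
        · exact h
      -- Z > X
      have hZX : X < Z := by
        have : X ^ 2 < Z ^ 2 := by nlinarith
        exact lt_of_pow_lt_pow_left₀ 2 hZ.le this
      -- coprime X Z
      have hcXZ : IsCoprime X Z := by
        have h1 : IsCoprime X (Y ^ 2) := hc.pow_right
        have h2 : IsCoprime X (Y ^ 2 + X * X) := h1.add_mul_left_right X
        have h3 : Y ^ 2 + X * X = Z ^ 2 := by linarith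
        rw [h3] at h2
        exact (IsCoprime.pow_right_iff two_pos).mp h2
      -- u, v
      obtain ⟨u, hu⟩ : ∃ u, Z + X = 2 * u := by
        obtain ⟨u, hu⟩ := hOZ.add_odd hOX
        exact ⟨u, by omega⟩
      obtain ⟨v, hv⟩ : ∃ v, Z - X = 2 * v := by
        obtain ⟨v, hv⟩ := hOZ.sub_odd hOX
        exact ⟨v, by omega⟩
      obtain ⟨k, hk⟩ : ∃ k, Y = 2 * k := hEY.two_dvd
      have hupos : 0 < u := by omega
      have hvpos : 0 < v := by omega
      have hkpos : 0 < k := by omega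
      have huv : u * v = k ^ 2 := by
        have e1 : (2*u) * (2*v) = Y ^ 2 := by
          rw [← hu, ← hv]; linear_combination -hpy
        rw [hk] at e1
        have h4 : (4:ℤ) * (u * v) = 4 * k ^ 2 := by linear_combination e1
        exact mul_left_cancel₀ (by norm_num) h4
      -- coprime u v
      have hcuv : IsCoprime u v := by
        rw [Int.isCoprime_iff_gcd_eq_one]
        have hgu : (↑(Int.gcd u v) : ℤ) ∣ u := Int.gcd_dvd_left u v
        have hgv : (↑(Int.gcd u v) : ℤ) ∣ v := Int.gcd_dvd_right u v
        have hgZ : (↑(Int.gcd u v) : ℤ) ∣ Z := by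
          have : Z = u + v := by omega
          rw [this]; exact dvd_add hgu hgv
        have hgX : (↑(Int.gcd u v) : ℤ) ∣ X := by
          have : X = u - v := by omega
          rw [this]; exact dvd_sub hgu hgv
        have : (↑(Int.gcd u v) : ℤ) ∣ (↑(Int.gcd X Z) : ℤ) := Int.dvd_coe_gcd hgX hgZ
        rw [Int.isCoprime_iff_gcd_eq_one.mp hcXZ] at this
        exact_mod_cast Int.eq_one_of_dvd_one (by positivity) this
      -- m, n
      obtain ⟨m, hmpos, hm⟩ := pos_sq_of_coprime hcuv huv hupos
      obtain ⟨n, hnpos, hn⟩ := pos_sq_of_coprime hcuv.symm (by rw [mul_comm]; exact huv) hvpos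
      have hcmn : IsCoprime m n := by
        have := hcuv; rw [hm, hn] at this
        exact (IsCoprime.pow_left_iff two_pos).mp ((IsCoprime.pow_right_iff two_pos).mp this)
      have hXmn : X = m ^ 2 - n ^ 2 := by rw [← hm, ← hn]; omega
      have hZmn : Z = m ^ 2 + n ^ 2 := by rw [← hm, ← hn]; omega
      have hYmn : Y = 2 * (m * n) := by
        have : k ^ 2 = (m * n) ^ 2 := by
          rw [hm, hn] at huv; linear_combination -huv
        have := sq_eq_sq₀ hkpos.le (by positivity) |>.mp this
        omega
      have hnm : n < m := by
        have h1 : n ^ 2 < m ^ 2 := by linarith [hXmn, hX]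
        exact lt_of_pow_lt_pow_left₀ 2 hmpos.le h1
      -- parity of m, n : exactly one is even
      have hoddsub : Odd (m - n) ∧ Odd (m + n) := by
        rcases Int.even_or_odd m with hm2 | hm2 <;> rcases Int.even_or_odd n with hn2 | hn2
        · exfalso
          have e1 : Even (Z) := by
            rw [hZmn, sq, sq]
            exact (hm2.mul_right m).add (hn2.mul_right n)
          exact (Int.not_odd_iff_even.mpr e1) hOZ
        · exact ⟨hm2.sub_odd hn2, hm2.add_odd hn2⟩
        · exact ⟨hm2.sub_even hn2, hm2.add_even hn2⟩
        · exfalso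
          have e1 : Even (Z) := by
            rw [hZmn, sq, sq]
            exact (hm2.mul hm2).add_odd (hn2.mul hn2)
          exact (Int.not_odd_iff_even.mpr e1) hOZ
      obtain ⟨hosub, hoadd⟩ := hoddsub
      -- main equation
      have heq4 : m * n * (m - n) * (m + n) = ↑d * W ^ 2 := by
        have h2 : (2:ℤ) * (m * n * (m - n) * (m + n)) = 2 * (↑d * W ^ 2) := by
          rw [hXmn, hYmn] at hw; linear_combination hw
        exact mul_left_cancel₀ two_ne_zero h2
      -- pairwise coprimality
      have c_m_sub : IsCoprime m (m - n) := by
        have := (hcmn.neg_right).add_mul_left_right 1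
        rwa [show -n + m * 1 = m - n by ring] at this
      have c_m_add : IsCoprime m (m + n) := by
        have := hcmn.add_mul_left_right 1
        rwa [show n + m * 1 = m + n by ring] at this
      have c_n_sub : IsCoprime n (m - n) := by
        have := hcmn.symm.add_mul_left_right (-1)
        rwa [show m + n * (-1) = m - n by ring] at this
      have c_n_add : IsCoprime n (m + n) := by
        have := hcmn.symm.add_mul_left_right 1
        rwa [show m + n * 1 = m + n by ring] at this
      have c_sub_add : IsCoprime (m - n) (m + n) := by
        have h2 : IsCoprime (m - n) 2 :=
          ((Int.prime_two.coprime_iff_not_dvd).mpr (fun hdvd =>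
            (Int.not_even_iff_odd.mpr hosub) ((even_iff_two_dvd).mpr hdvd))).symm
        have h3 : IsCoprime (m - n) (2 * n) := h2.mul_right c_n_sub.symm
        have := h3.add_mul_left_right 1
        rwa [show 2 * n + (m - n) * 1 = m + n by ring] at this
      have hmnsubpos : 0 < m - n := by omega
      have hmnaddpos : 0 < m + n := by omega
      -- d divides one of the four factors
      have hdvd : (↑d : ℤ) ∣ m * n * (m - n) * (m + n) := ⟨W ^ 2, heq4⟩
      have hdne : (d:ℤ) ≠ 0 := by positivity
      rcases hdZ.dvd_mul.mp hdvd with h3 | hadd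
      · rcases hdZ.dvd_mul.mp h3 with h2 | hsub
        · rcases hdZ.dvd_mul.mp h2 with hdm | hdn
          · -- Case A : d ∣ m, contradiction mod 8
            obtain ⟨m₁, hm1⟩ := hdm
            have hm1pos : 0 < m₁ := pos_factor hdpos hmpos hm1
            have hm1dvd : m₁ ∣ m := ⟨↑d, by rw [hm1]; ring⟩
            have P : m₁ * (n * ((m - n) * (m + n))) = W ^ 2 := by
              apply mul_left_cancel₀ hdne
              linear_combination heq4 - (n*((m-n)*(m+n)))*hm1
            have c1 : IsCoprime m₁ (n * ((m - n) * (m + n))) :=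
              (hcmn.of_isCoprime_of_dvd_left hm1dvd).mul_right
                ((c_m_sub.of_isCoprime_of_dvd_left hm1dvd).mul_right
                  (c_m_add.of_isCoprime_of_dvd_left hm1dvd))
            obtain ⟨α, hαpos, hα2⟩ := pos_sq_of_coprime c1 P hm1pos
            have c3 : IsCoprime (m - n) (m₁ * (n * (m + n))) :=
              (c_m_sub.of_isCoprime_of_dvd_left hm1dvd).symm.mul_right
                (c_n_sub.symm.mul_right c_sub_add)
            obtain ⟨γ, hγpos, hγ2⟩ := pos_sq_of_coprime c3
              (show (m - n) * (m₁ * (n * (m + n))) = W ^ 2 by linear_combination P) hmnsubpos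
            have c4 : IsCoprime (m + n) (m₁ * (n * (m - n))) :=
              (c_m_add.of_isCoprime_of_dvd_left hm1dvd).symm.mul_right
                (c_n_add.symm.mul_right c_sub_add.symm)
            obtain ⟨δ, hδpos, hδ2⟩ := pos_sq_of_coprime c4
              (show (m + n) * (m₁ * (n * (m - n))) = W ^ 2 by linear_combination P) hmnaddpos
            have hA : δ ^ 2 + γ ^ 2 = 2 * (d:ℤ) * α ^ 2 := by
              linear_combination -hδ2 - hγ2 + 2*hm1 + 2*(d:ℤ)*hα2
            have hOδ : Odd δ := by
              rcases Int.even_or_odd δ with h | h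
              · exfalso
                have : Even (δ ^ 2) := by rw [sq]; exact h.mul_right δ
                rw [← hδ2] at this
                exact (Int.not_odd_iff_even.mpr this) hoadd
              · exact h
            have hOγ : Odd γ := by
              rcases Int.even_or_odd γ with h | h
              · exfalso
                have : Even (γ ^ 2) := by rw [sq]; exact h.mul_right γ
                rw [← hγ2] at this
                exact (Int.not_odd_iff_even.mpr this) hosub
              · exact h
            obtain ⟨δ₁, hδ1⟩ := hOδ
            obtain ⟨γ₁, hγ1⟩ := hOγ
            rw [hδ1, hγ1] at hA
            have hcast := congrArg (fun t : ℤ => (t : ZMod 8)) hA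
            push_cast at hcast
            rw [hd8] at hcast
            exact zmod8A _ _ _ hcast
          · -- Case B : d ∣ n, descent
            obtain ⟨n₁, hn1⟩ := hdn
            have hn1pos : 0 < n₁ := pos_factor hdpos hnpos hn1
            have hn1dvd : n₁ ∣ n := ⟨↑d, by rw [hn1]; ring⟩
            have P : m * (n₁ * ((m - n) * (m + n))) = W ^ 2 := by
              apply mul_left_cancel₀ hdne
              linear_combination heq4 - (m*((m-n)*(m+n)))*hn1
            have c1 : IsCoprime m (n₁ * ((m - n) * (m + n))) :=
              (hcmn.symm.of_isCoprime_of_dvd_left hn1dvd).symm.mul_right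
                (c_m_sub.mul_right c_m_add)
            obtain ⟨a, hapos, ha2⟩ := pos_sq_of_coprime c1 P hmpos
            have c2 : IsCoprime n₁ (m * ((m - n) * (m + n))) :=
              (hcmn.symm.of_isCoprime_of_dvd_left hn1dvd).mul_right
                ((c_n_sub.of_isCoprime_of_dvd_left hn1dvd).mul_right
                  (c_n_add.of_isCoprime_of_dvd_left hn1dvd))
            obtain ⟨b, hbpos, hb2⟩ := pos_sq_of_coprime c2
              (show n₁ * (m * ((m - n) * (m + n))) = W ^ 2 by linear_combination P) hn1pos
            have c3 : IsCoprime (m - n) (m * (n₁ * (m + n))) :=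
              c_m_sub.symm.mul_right
                ((c_n_sub.of_isCoprime_of_dvd_left hn1dvd).symm.mul_right c_sub_add)
            obtain ⟨c, hcpos, hc2⟩ := pos_sq_of_coprime c3
              (show (m - n) * (m * (n₁ * (m + n))) = W ^ 2 by linear_combination P) hmnsubpos
            have c4 : IsCoprime (m + n) (m * (n₁ * (m - n))) :=
              c_m_add.symm.mul_right
                ((c_n_add.of_isCoprime_of_dvd_left hn1dvd).symm.mul_right c_sub_add.symm)
            obtain ⟨e, hepos, he2⟩ := pos_sq_of_coprime c4
              (show (m + n) * (m * (n₁ * (m - n))) = W ^ 2 by linear_combination P) hmnaddpos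
            -- e, c odd
            have hOe : Odd e := by
              rcases Int.even_or_odd e with h | h
              · exfalso
                have : Even (e ^ 2) := by rw [sq]; exact h.mul_right e
                rw [← he2] at this
                exact (Int.not_odd_iff_even.mpr this) hoadd
              · exact h
            have hOc : Odd c := by
              rcases Int.even_or_odd c with h | h
              · exfalso
                have : Even (c ^ 2) := by rw [sq]; exact h.mul_right c
                rw [← hc2] at this
                exact (Int.not_odd_iff_even.mpr this) hosub
              · exact h
            -- b is even
            have hEb : Even b := by
              by_contra hb
              have hOb := Int.not_even_iff_odd.mp hb
              have hB : e ^ 2 - c ^ 2 = 2 * (d:ℤ) * b ^ 2 := by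
                linear_combination -he2 + hc2 + 2*hn1 + 2*(d:ℤ)*hb2
              obtain ⟨e₁, he1⟩ := hOe
              obtain ⟨c₁, hcc1⟩ := hOc
              obtain ⟨b₁, hbb1⟩ := hOb
              rw [he1, hcc1, hbb1] at hB
              have hcast := congrArg (fun t : ℤ => (t : ZMod 8)) hB
              push_cast at hcast
              rw [hd8] at hcast
              exact zmod8B _ _ _ hcast
            obtain ⟨b₁, hb1⟩ := hEb
            have hb1' : b = 2 * b₁ := by omega
            have hb1pos : 0 < b₁ := by omega
            -- e > c
            have hce : c < e := by
              have : c ^ 2 < e ^ 2 := by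
                rw [← hc2, ← he2]; omega
              exact lt_of_pow_lt_pow_left₀ 2 hepos.le this
            -- r, s
            obtain ⟨r, hrr⟩ : ∃ r, e + c = 2 * r := by
              obtain ⟨r, h⟩ := hOe.add_odd hOc; exact ⟨r, by omega⟩
            obtain ⟨s, hss⟩ : ∃ s, e - c = 2 * s := by
              obtain ⟨s, h⟩ := hOe.sub_odd hOc; exact ⟨s, by omega⟩
            have hrpos : 0 < r := by omega
            have hspos : 0 < s := by omega
            have hers : e = r + s := by omega
            have hcrs : c = r - s := by omega
            rw [hers] at he2
            rw [hcrs] at hc2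
            -- new equations
            have hr2 : r ^ 2 + s ^ 2 = a ^ 2 := by
              have h2 : (2:ℤ) * (r ^ 2 + s ^ 2) = 2 * a ^ 2 := by
                linear_combination -he2 - hc2 + 2*ha2
              exact mul_left_cancel₀ two_ne_zero h2
            have hrs : r * s = 2 * (d:ℤ) * b₁ ^ 2 := by
              have h4 : (4:ℤ) * (r * s) = 4 * (2 * (d:ℤ) * b₁ ^ 2) := by
                linear_combination -he2 + hc2 + 2*hn1 + 2*(d:ℤ)*hb2 + 2*(d:ℤ)*(b+2*b₁)*hb1'
              exact mul_left_cancel₀ (by norm_num) h4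
            -- coprime r s
            have hcec : IsCoprime (r - s) (r + s) := by
              have := c_sub_add
              rw [hc2, he2] at this
              exact (IsCoprime.pow_left_iff two_pos).mp ((IsCoprime.pow_right_iff two_pos).mp this)
            have hcrs2 : IsCoprime r s := by
              rw [Int.isCoprime_iff_gcd_eq_one]
              have hgu : (↑(Int.gcd r s) : ℤ) ∣ r := Int.gcd_dvd_left r s
              have hgv : (↑(Int.gcd r s) : ℤ) ∣ s := Int.gcd_dvd_right r s
              have hg1 : (↑(Int.gcd r s) : ℤ) ∣ r - s := dvd_sub hgu hgv
              have hg2 : (↑(Int.gcd r s) : ℤ) ∣ r + s := dvd_add hgu hgv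
              have : (↑(Int.gcd r s) : ℤ) ∣ (↑(Int.gcd (r-s) (r+s)) : ℤ) := Int.dvd_coe_gcd hg1 hg2
              rw [Int.isCoprime_iff_gcd_eq_one.mp hcec] at this
              exact_mod_cast Int.eq_one_of_dvd_one (by positivity) this
            -- descent : a < Z
            have haZ : a < Z := by
              have h1 : a ≤ a ^ 2 := le_self_pow₀ hapos two_ne_zero
              have h1' : a ≤ m := by rw [ha2]; exact h1
              have h2m : m ≤ m ^ 2 := le_self_pow₀ hmpos two_ne_zero
              rw [hZmn]
              exact lt_of_le_of_lt (le_trans h1' h2m)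
                (lt_add_of_pos_right _ (by positivity))
            have haN : a.natAbs ≤ N := by omega
            exact IH r s a b₁ haN hrpos hspos hb1pos hcrs2 hr2 hrs
        · -- Case C : d ∣ m - n, 2 is a square mod d
          obtain ⟨c₁, hc1⟩ := hsub
          have hc1pos : 0 < c₁ := pos_factor hdpos hmnsubpos hc1
          have hc1dvd : c₁ ∣ m - n := ⟨↑d, by rw [hc1]; ring⟩
          have P : m * (n * (c₁ * (m + n))) = W ^ 2 := by
            apply mul_left_cancel₀ hdne
            linear_combination heq4 - (m*(n*(m+n)))*hc1
          have c1c : IsCoprime m (n * (c₁ * (m + n))) :=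
            hcmn.mul_right ((c_m_sub.symm.of_isCoprime_of_dvd_left hc1dvd).symm.mul_right c_m_add)
          obtain ⟨a, hapos, ha2⟩ := pos_sq_of_coprime c1c P hmpos
          have c2c : IsCoprime n (m * (c₁ * (m + n))) :=
            hcmn.symm.mul_right ((c_n_sub.symm.of_isCoprime_of_dvd_left hc1dvd).symm.mul_right c_n_add)
          obtain ⟨b, hbpos, hb2⟩ := pos_sq_of_coprime c2c
            (show n * (m * (c₁ * (m + n))) = W ^ 2 by linear_combination P) hnpos
          have c3c : IsCoprime c₁ (m * (n * (m + n))) :=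
            (c_m_sub.symm.of_isCoprime_of_dvd_left hc1dvd).mul_right
              ((c_n_sub.symm.of_isCoprime_of_dvd_left hc1dvd).mul_right
                (c_sub_add.of_isCoprime_of_dvd_left hc1dvd))
          obtain ⟨γ, hγpos, hγ2⟩ := pos_sq_of_coprime c3c
            (show c₁ * (m * (n * (m + n))) = W ^ 2 by linear_combination P) hc1pos
          have c4c : IsCoprime (m + n) (m * (n * c₁)) :=
            c_m_add.symm.mul_right (c_n_add.symm.mul_right
              (c_sub_add.symm.of_isCoprime_of_dvd_right hc1dvd))
          obtain ⟨e, hepos, he2⟩ := pos_sq_of_coprime c4c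
            (show (m + n) * (m * (n * c₁)) = W ^ 2 by linear_combination P) hmnaddpos
          -- d does not divide a
          have hdm : ¬ ((d:ℤ) ∣ m) := by
            intro hdm
            have hdn : (d:ℤ) ∣ n := by
              have : n = m - (m - n) := by ring
              rw [this]; exact dvd_sub hdm ⟨c₁, hc1⟩
            have := Int.isUnit_iff.mp (hcmn.isUnit_of_dvd' hdm hdn)
            have h2d : (2:ℤ) ≤ (d:ℤ) := by exact_mod_cast hd.two_le
            omega
          have hda : ¬ ((d:ℤ) ∣ a) := fun h => hdm (by rw [ha2]; exact dvd_pow h two_ne_zero)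
          -- 2 is a square mod d
          have heC : e ^ 2 + (d:ℤ) * γ ^ 2 = 2 * a ^ 2 := by
            linear_combination -he2 - hc1 - (d:ℤ)*hγ2 + 2*ha2
          have hcast := congrArg (fun t : ℤ => (t : ZMod d)) heC
          push_cast at hcast
          rw [ZMod.natCast_self] at hcast
          have hane : ((a:ℤ) : ZMod d) ≠ 0 := by
            rw [Ne, ZMod.intCast_zmod_eq_zero_iff_dvd]
            exact hda
          exact h2 ⟨((e:ℤ) : ZMod d) * ((a:ℤ) : ZMod d)⁻¹, by
            field_simp
            linear_combination -hcast⟩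
      · -- Case D : d ∣ m + n, -1 is a square mod d
        obtain ⟨e₁, he1⟩ := hadd
        have he1pos : 0 < e₁ := pos_factor hdpos hmnaddpos he1
        have he1dvd : e₁ ∣ m + n := ⟨↑d, by rw [he1]; ring⟩
        have P : m * (n * ((m - n) * e₁)) = W ^ 2 := by
          apply mul_left_cancel₀ hdne
          linear_combination heq4 - (m*(n*(m-n)))*he1
        have c1c : IsCoprime m (n * ((m - n) * e₁)) :=
          hcmn.mul_right (c_m_sub.mul_right
            (c_m_add.symm.of_isCoprime_of_dvd_left he1dvd).symm)
        obtain ⟨a, hapos, ha2⟩ := pos_sq_of_coprime c1c P hmpos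
        have c2c : IsCoprime n (m * ((m - n) * e₁)) :=
          hcmn.symm.mul_right (c_n_sub.mul_right
            (c_n_add.symm.of_isCoprime_of_dvd_left he1dvd).symm)
        obtain ⟨b, hbpos, hb2⟩ := pos_sq_of_coprime c2c
          (show n * (m * ((m - n) * e₁)) = W ^ 2 by linear_combination P) hnpos
        have c4c : IsCoprime e₁ (m * (n * (m - n))) :=
          (c_m_add.symm.of_isCoprime_of_dvd_left he1dvd).mul_right
            ((c_n_add.symm.of_isCoprime_of_dvd_left he1dvd).mul_right
              (c_sub_add.symm.of_isCoprime_of_dvd_left he1dvd))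
        obtain ⟨δ, hδpos, hδ2⟩ := pos_sq_of_coprime c4c
          (show e₁ * (m * (n * (m - n))) = W ^ 2 by linear_combination P) he1pos
        have hdm : ¬ ((d:ℤ) ∣ m) := by
          intro hdm
          have hdn : (d:ℤ) ∣ n := by
            have : n = (m + n) - m := by ring
            rw [this]; exact dvd_sub ⟨e₁, he1⟩ hdm
          have := Int.isUnit_iff.mp (hcmn.isUnit_of_dvd' hdm hdn)
          have h2d : (2:ℤ) ≤ (d:ℤ) := by exact_mod_cast hd.two_le
          omega
        have hda : ¬ ((d:ℤ) ∣ a) := fun h => hdm (by rw [ha2]; exact dvd_pow h two_ne_zero)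
        have heD : a ^ 2 + b ^ 2 = (d:ℤ) * δ ^ 2 := by
          linear_combination -ha2 - hb2 + he1 + (d:ℤ)*hδ2
        have hcast := congrArg (fun t : ℤ => (t : ZMod d)) heD
        push_cast at hcast
        rw [ZMod.natCast_self] at hcast
        have hane : ((a:ℤ) : ZMod d) ≠ 0 := by
          rw [Ne, ZMod.intCast_zmod_eq_zero_iff_dvd]
          exact hda
        exact h1 ⟨((b:ℤ) : ZMod d) * ((a:ℤ) : ZMod d)⁻¹, by
          field_simp
          linear_combination -hcast⟩
  -- use key, with WLOG
    have hEV : Even X ∨ Even Y := by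
      have : Even (X * Y) := by
        rw [hw]; exact ⟨↑d * W ^ 2, by ring⟩
      exact Int.even_mul.mp this
    have hZpos : (0:ℤ) < |Z| := by
      rcases eq_or_ne Z 0 with h0 | h0
      · rw [h0] at hpy; nlinarith
      · exact abs_pos.mpr h0
    have hZN' : |Z|.natAbs ≤ N + 1 := by rwa [Int.natAbs_abs]
    rcases hEV with hEX | hEY
    · exact key Y X |Z| W hZN' hY hX hZpos hW hEX hc.symm (by rw [← hZsq]; linarith) (by linarith [hw])
    · exact key X Y |Z| W hZN' hX hY hZpos hW hEY hc (by rw [← hZsq]; linarith) hw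

def IsCongruentNumber (n : ℕ) : Prop :=
  ∃ a b c : ℚ, 0 < a ∧ 0 < b ∧ 0 < c ∧ a ^ 2 + b ^ 2 = c ^ 2 ∧ a * b = 2 * n

theorem stmt_4 (d : ℕ) (hd : d.Prime) (hd3 : 3 < d)
    (h1 : ¬ IsSquare (-1 : ZMod d)) (h2 : ¬ IsSquare (2 : ZMod d)) :
    (∀ x y : ℚ, y ^ 2 = x ^ 3 - (d : ℚ) ^ 2 * x → y = 0) ∧
      ¬ IsCongruentNumber d := by
  haveI : Fact d.Prime := ⟨hd⟩
  have hd2 : d ≠ 2 := by omega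
  have h4 : d % 4 = 3 := by
    by_contra h
    exact h1 (ZMod.exists_sq_eq_neg_one_iff.mpr h)
  have h8 : d % 8 = 3 := by
    have h17 : ¬ (d % 8 = 1 ∨ d % 8 = 7) :=
      fun h => h2 ((ZMod.exists_sq_eq_two_iff hd2).mpr h)
    omega
  have main : ¬ IsCongruentNumber d := by
    rintro ⟨a, b, c, ha, hb, hc, habc, hab⟩
    set q : ℕ := a.den * b.den * c.den with hqdef
    have hq0 : 0 < q := by positivity
    set A : ℤ := a.num * (b.den * c.den) with hAdef
    set B : ℤ := b.num * (a.den * c.den) with hBdef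
    set C : ℤ := c.num * (a.den * b.den) with hCdef
    have hnd : ∀ r : ℚ, (r.num : ℚ) = r * (r.den : ℚ) := by
      intro r
      rw [eq_comm, ← eq_div_iff (by exact_mod_cast r.den_nz : ((r.den : ℚ)) ≠ 0)]
      exact (Rat.num_div_den r).symm
    have ea : (A : ℚ) = a * q := by
      rw [hAdef, hqdef]
      push_cast
      rw [hnd a]
      ring
    have eb : (B : ℚ) = b * q := by
      rw [hBdef, hqdef]
      push_cast
      rw [hnd b]
      ring
    have ec : (C : ℚ) = c * q := by
      rw [hCdef, hqdef]
      push_cast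
      rw [hnd c]
      ring
    have hApos : 0 < A := by
      have : (0:ℚ) < (A:ℚ) := by rw [ea]; positivity
      exact_mod_cast this
    have hBpos : 0 < B := by
      have : (0:ℚ) < (B:ℚ) := by rw [eb]; positivity
      exact_mod_cast this
    have hCpos : 0 < C := by
      have : (0:ℚ) < (C:ℚ) := by rw [ec]; positivity
      exact_mod_cast this
    have hA2 : A ^ 2 + B ^ 2 = C ^ 2 := by
      have : (A:ℚ) ^ 2 + (B:ℚ) ^ 2 = (C:ℚ) ^ 2 := by
        rw [ea, eb, ec]; linear_combination (q:ℚ)^2 * habc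
      exact_mod_cast this
    have hAB : A * B = 2 * d * (q:ℤ) ^ 2 := by
      have : (A:ℚ) * (B:ℚ) = 2 * d * (q:ℚ) ^ 2 := by
        rw [ea, eb]; linear_combination (q:ℚ)^2 * hab
      exact_mod_cast this
    -- remove gcd
    set g : ℕ := Int.gcd A B with hgdef
    have hgpos : 0 < g := Int.gcd_pos_iff.mpr (Or.inl hApos.ne')
    have hgne : (g:ℤ) ≠ 0 := by exact_mod_cast hgpos.ne'
    obtain ⟨X, hX⟩ : (g:ℤ) ∣ A := Int.gcd_dvd_left A B
    obtain ⟨Y, hY⟩ : (g:ℤ) ∣ B := Int.gcd_dvd_right A B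
    have hgC : (g:ℤ) ∣ C := by
      have h2' : (g:ℤ) ^ 2 ∣ C ^ 2 :=
        ⟨X ^ 2 + Y ^ 2, by rw [← hA2, hX, hY]; ring⟩
      exact (Int.pow_dvd_pow_iff two_ne_zero).mp h2'
    obtain ⟨Z, hZ⟩ := hgC
    have hXpos : 0 < X := pos_factor (by exact_mod_cast hgpos) hApos hX
    have hYpos : 0 < Y := pos_factor (by exact_mod_cast hgpos) hBpos hY
    have hXY2 : X ^ 2 + Y ^ 2 = Z ^ 2 := by
      have h2' : (g:ℤ)^2 * (X ^ 2 + Y ^ 2) = (g:ℤ)^2 * Z ^ 2 := by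
        rw [hX, hY, hZ] at hA2; linear_combination hA2
      exact mul_left_cancel₀ (pow_ne_zero 2 hgne) h2'
    have hcXY : IsCoprime X Y := by
      rw [Int.isCoprime_iff_gcd_eq_one]
      have hdg := Int.gcd_div_gcd_div_gcd (hgdef ▸ hgpos : 0 < Int.gcd A B)
      have e1 : A / (g:ℤ) = X := by rw [hX]; exact Int.mul_ediv_cancel_left X hgne
      have e2 : B / (g:ℤ) = Y := by rw [hY]; exact Int.mul_ediv_cancel_left Y hgne
      rwa [← hgdef, e1, e2] at hdg
    have hgXY : (g:ℤ)^2 * (X * Y) = 2 * d * (q:ℤ)^2 := by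
      rw [hX, hY] at hAB; linear_combination hAB
    -- split common part of g and q
    set h0 : ℕ := Nat.gcd g q with hh0def
    have hh0pos : 0 < h0 := Nat.gcd_pos_of_pos_left q hgpos
    obtain ⟨g', hg'⟩ : h0 ∣ g := Nat.gcd_dvd_left g q
    obtain ⟨q', hq'⟩ : h0 ∣ q := Nat.gcd_dvd_right g q
    have hcop : Nat.Coprime g' q' := by
      have := Nat.coprime_div_gcd_div_gcd (hh0def ▸ hh0pos : 0 < Nat.gcd g q)
      rwa [← hh0def, hg', hq', Nat.mul_div_cancel_left g' hh0pos,
        Nat.mul_div_cancel_left q' hh0pos] at this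
    have hq'pos : 0 < q' := by
      rcases Nat.eq_zero_or_pos q' with h | h
      · rw [h, mul_zero] at hq'; omega
      · exact h
    have hg'pos : 0 < g' := by
      rcases Nat.eq_zero_or_pos g' with h | h
      · rw [h, mul_zero] at hg'; omega
      · exact h
    have heq2 : (g':ℤ)^2 * (X * Y) = 2 * d * (q':ℤ)^2 := by
      have hcast : (g:ℤ) = (h0:ℤ) * (g':ℤ) := by exact_mod_cast congrArg (Nat.cast : ℕ → ℤ) hg'
      have hcast2 : (q:ℤ) = (h0:ℤ) * (q':ℤ) := by exact_mod_cast congrArg (Nat.cast : ℕ → ℤ) hq'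
      have hh0ne : ((h0:ℤ))^2 ≠ 0 := by positivity
      apply mul_left_cancel₀ hh0ne
      rw [hcast, hcast2] at hgXY
      linear_combination hgXY
    -- g' = 1 using squarefreeness of 2d
    have hg'1 : g' = 1 := by
      have hdvdZ : (g':ℤ)^2 ∣ 2 * d * (q':ℤ)^2 := ⟨X * Y, heq2.symm⟩
      have hdvdN : g'^2 ∣ 2 * d * q'^2 := by
        have : ((g'^2 : ℕ) : ℤ) ∣ ((2 * d * q'^2 : ℕ) : ℤ) := by push_cast; exact hdvdZ
        exact_mod_cast this
      have hcop2 : Nat.Coprime (g'^2) (q'^2) := Nat.Coprime.pow 2 2 hcop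
      have hdvd2d : g'^2 ∣ 2 * d := hcop2.dvd_of_dvd_mul_right hdvdN
      have hsqf : Squarefree (2 * d) :=
        (Nat.squarefree_mul ((Nat.coprime_primes Nat.prime_two hd).mpr (by omega))).mpr
          ⟨Nat.prime_two.squarefree, hd.squarefree⟩
      have := hsqf g' (by rwa [← sq])
      exact Nat.isUnit_iff.mp this
    have hXYeq : X * Y = 2 * d * (q':ℤ)^2 := by
      rw [hg'1] at heq2; push_cast at heq2; linarith [heq2]
    exact descent d hd h8 h1 h2 Z.natAbs X Y Z (q':ℤ) le_rfl hXpos hYpos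
      (by exact_mod_cast hq'pos) hcXY hXY2 hXYeq
  refine ⟨?_, main⟩
  intro x y hxy
  by_contra hy
  apply main
  have hdq : (0:ℚ) < d := by exact_mod_cast hd.pos
  have hx0 : x ≠ 0 := by
    rintro rfl
    apply hy
    have : y^2 = 0 := by rw [hxy]; ring
    exact pow_eq_zero_iff two_ne_zero |>.mp this
  have hxd : x^2 - (d:ℚ)^2 ≠ 0 := by
    intro h
    apply hy
    have : y^2 = x * (x^2 - (d:ℚ)^2) := by linear_combination hxy
    rw [h, mul_zero] at this
    exact pow_eq_zero_iff two_ne_zero |>.mp this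
  refine ⟨|(x^2 - (d:ℚ)^2)/y|, |2*(d:ℚ)*x/y|, (x^2+(d:ℚ)^2)/|y|, ?_, ?_, ?_, ?_, ?_⟩
  · exact abs_pos.mpr (div_ne_zero hxd hy)
  · exact abs_pos.mpr (div_ne_zero (by positivity) hy)
  · exact div_pos (by positivity) (abs_pos.mpr hy)
  · rw [sq_abs, sq_abs, div_pow, div_pow, div_pow, sq_abs]
    field_simp
    ring
  · rw [← abs_mul]
    have hprod : (x^2 - (d:ℚ)^2)/y * (2*(d:ℚ)*x/y) = 2*(d:ℚ) := by
      field_simp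
      linear_combination -hxy
    rw [hprod]
    exact abs_of_pos (by positivity)
end

section
/- Let $d$ be an odd prime with $2$ a quadratic nonresidue modulo $d$. Suppose $t$ is a positive integer with $d \nmid t$ and suppose there exist positive integers $h', e', m'$ with $d + t^2 = h' e' m'$ and $d - t^2 = \frac{1}{2} h' (m'^2 - e'^2)$. Then a contradiction follows; that is, no such $h', e', m'$ exist. -/
theorem stmt_9 (d : ℕ) (hd : d.Prime) (hodd : Odd d)
    (h2 : ¬ IsSquare (2 : ZMod d)) (t : ℕ) (ht : 0 < t) (hdt : ¬ d ∣ t) :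
    ¬ ∃ h' e' m' : ℕ, 0 < h' ∧ 0 < e' ∧ 0 < m' ∧
      (d : ℤ) + (t : ℤ) ^ 2 = (h' : ℤ) * e' * m' ∧
      2 * ((d : ℤ) - (t : ℤ) ^ 2) = (h' : ℤ) * ((m' : ℤ) ^ 2 - (e' : ℤ) ^ 2) := by
  haveI : Fact d.Prime := ⟨hd⟩
  rintro ⟨h', e', m', hh, he, hm, eq1, eq2⟩
  -- if d divides h' or e', then d divides t
  have hdvd : ∀ x : ℕ, d ∣ x → ((x : ℤ) ∣ (h' : ℤ) * e' * m') → False := by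
    intro x hx hxdvd
    have h1 : (d : ℤ) ∣ (h' : ℤ) * e' * m' :=
      dvd_trans (Int.natCast_dvd_natCast.mpr hx) hxdvd
    have h2' : (d : ℤ) ∣ (t : ℤ) ^ 2 := by
      have h3 := eq1 ▸ h1
      exact (dvd_add_right (dvd_refl (d:ℤ))).mp h3
    have : (d : ℤ) ∣ (t : ℤ) := Int.Prime.dvd_pow' (by exact_mod_cast hd) h2'
    exact hdt (Int.natCast_dvd_natCast.mp this)
  have hh0 : (h' : ZMod d) ≠ 0 := by
    intro h
    exact hdvd h' ((ZMod.natCast_eq_zero_iff h' d).mp h) ⟨(e' : ℤ) * m', by ring⟩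
  have he0 : (e' : ZMod d) ≠ 0 := by
    intro h
    exact hdvd e' ((ZMod.natCast_eq_zero_iff e' d).mp h) ⟨(h' : ℤ) * m', by ring⟩
  -- key identity
  have key : (4 * d : ℤ) = (h' : ℤ) * (((m' : ℤ) + e') ^ 2 - 2 * (e' : ℤ) ^ 2) := by
    linear_combination 2 * eq1 + eq2
  have keyz : (0 : ZMod d) = (h' : ZMod d) * (((m' : ZMod d) + e') ^ 2 - 2 * (e' : ZMod d) ^ 2) := by
    have := congrArg (Int.cast : ℤ → ZMod d) key
    push_cast at this
    simpa using this
  have hsq : ((m' : ZMod d) + e') ^ 2 = 2 * (e' : ZMod d) ^ 2 := by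
    rcases mul_eq_zero.mp keyz.symm with h | h
    · exact absurd h hh0
    · linear_combination h
  apply h2
  refine ⟨((m' : ZMod d) + e') * (e' : ZMod d)⁻¹, ?_⟩
  have : (2 : ZMod d) = (((m' : ZMod d) + e') * (e' : ZMod d)⁻¹) ^ 2 := by
    field_simp
    linear_combination -hsq
  rw [this]; ring
end
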